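/- Let k, r be positive integers with gcd(k+1, r-1) = 1 and r ≥ 2. Suppose m is a positive integer with m ≡ k (mod k+1) and ((m+1)/(k+1))·(r-1) ≥ ⌊m/k⌋·r - 1, where (m+1)/(k+1) is an integer. Then m = k. -/
import Mathlib


/-- If m > 0, m ≡ k (mod k+1), and ((m+1)/(k+1))·(r-1) ≥ ⌊m/k⌋·r - 1,
then m = k. -/
theorem key_numerical_inequality (k r m : ℕ) (hk : 1 ≤ k) (hr : 2 ≤ r)
    (hcop : Nat.Coprime (k + 1) (r - 1)) (hm : 0 < m)
    (hmod : m % (k + 1) = k % (k + 1))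
    (hineq : ((m / k : ℕ) : ℤ) * (r : ℤ) - 1 ≤ (((m + 1) / (k + 1) : ℕ) : ℤ) * ((r : ℤ) - 1)) :
    m = k := by
  set t := m / (k + 1) with ht
  have hmk : m % (k + 1) = k := by
    rw [hmod]; exact Nat.mod_eq_of_lt (by omega)
  have hm' : m = (k + 1) * t + k := by
    have h := Nat.div_add_mod m (k + 1)
    rw [hmk, ← ht] at h; exact h.symm
  have h1 : (m + 1) / (k + 1) = t + 1 := by
    rw [hm', show (k + 1) * t + k + 1 = (t + 1) * (k + 1) by ring]
    exact Nat.mul_div_cancel _ (by omega)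
  have h2 : m / k = t / k + (t + 1) := by
    rw [hm', show (k + 1) * t + k = t + (t + 1) * k by ring]
    exact Nat.add_mul_div_right _ _ (by omega)
  rw [h1, h2] at hineq
  obtain ⟨q, hqdef⟩ : ∃ q, t / k = q := ⟨_, rfl⟩
  rw [hqdef] at hineq
  push_cast at hineq
  have hq : (0 : ℤ) ≤ (q : ℤ) := Int.natCast_nonneg _
  have hr' : (2 : ℤ) ≤ (r : ℤ) := by exact_mod_cast hr
  have htz : (0 : ℤ) ≤ (t : ℤ) := Int.natCast_nonneg _
  have ht0 : (t : ℤ) = 0 := by nlinarith [hineq, hq, hr', htz]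
  have : t = 0 := by exact_mod_cast ht0
  rw [hm', this]; ring
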